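/- Suppose ‖A‖ ≤ 1 (operator norm), ‖b‖ = 1, η ≥ 0, and T : ℕ with ‖x₀‖ + 3·η·T ≤ 1. Then for every t ≤ T, the inner product of the iterate with b satisfies ⟪b, x t⟫ ≥ ⟪b, x₀⟫ − 3·η·t. -/
import Mathlib


open scoped RealInnerProductSpace

theorem gradient_descent_overlap_lower_bound (n : ℕ)
    (A : EuclideanSpace ℝ (Fin n) →L[ℝ] EuclideanSpace ℝ (Fin n))
    (b : EuclideanSpace ℝ (Fin n)) (hb : ‖b‖ = 1)
    (f : EuclideanSpace ℝ (Fin n) → ℝ)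
    (hf : ∀ x, f x = (1/2) * ‖x‖^2 + (1/2) * ‖A x - b‖^2)
    (hA : ‖A‖ ≤ 1)
    (η : ℝ) (hη : 0 ≤ η) (x₀ : EuclideanSpace ℝ (Fin n))
    (x : ℕ → EuclideanSpace ℝ (Fin n))
    (hx0 : x 0 = x₀)
    (hx : ∀ t, x (t + 1) = x t - η • (x t + (ContinuousLinearMap.adjoint A) (A (x t) - b)))
    (T : ℕ) (hT : ‖x₀‖ + 3 * η * T ≤ 1)
    (t : ℕ) (ht : t ≤ T) :
    ⟪b, x t⟫ ≥ ⟪b, x₀⟫ - 3 * η * t := by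
  have hAadj : ‖ContinuousLinearMap.adjoint A‖ = ‖A‖ :=
    LinearIsometryEquiv.norm_map ContinuousLinearMap.adjoint A
  have key : ∀ s, s ≤ T → ‖x s‖ ≤ ‖x₀‖ + 3 * η * s ∧
      ⟪b, x s⟫ ≥ ⟪b, x₀⟫ - 3 * η * s := by
    intro s
    induction s with
    | zero => intro _; simp [hx0]
    | succ s ih =>
      intro hs
      have hs' : s ≤ T := Nat.le_of_succ_le hs
      obtain ⟨h1, h2⟩ := ih hs'
      have hst : 3 * η * s ≤ 3 * η * T := by
        have : (s : ℝ) ≤ T := by exact_mod_cast hs'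
        nlinarith
      have hxt1 : ‖x s‖ ≤ 1 := by linarith
      set g := x s + (ContinuousLinearMap.adjoint A) (A (x s) - b) with hg
      have hgb : ‖g‖ ≤ 3 := by
        have h3 : ‖A (x s) - b‖ ≤ ‖A (x s)‖ + ‖b‖ := norm_sub_le _ _
        have h4 : ‖A (x s)‖ ≤ ‖A‖ * ‖x s‖ := A.le_opNorm _
        have h5 : ‖(ContinuousLinearMap.adjoint A) (A (x s) - b)‖ ≤
            ‖ContinuousLinearMap.adjoint A‖ * ‖A (x s) - b‖ :=
          (ContinuousLinearMap.adjoint A).le_opNorm _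
        have h6 : ‖g‖ ≤ ‖x s‖ + ‖(ContinuousLinearMap.adjoint A) (A (x s) - b)‖ :=
          norm_add_le _ _
        have hA0 : 0 ≤ ‖A‖ := norm_nonneg _
        rw [hAadj] at h5
        nlinarith [norm_nonneg (A (x s) - b)]
      constructor
      · have : ‖x (s + 1)‖ ≤ ‖x s‖ + ‖η • g‖ := by
          rw [hx s]; exact norm_sub_le _ _
        rw [norm_smul, Real.norm_eq_abs, abs_of_nonneg hη] at this
        push_cast
        nlinarith
      · rw [hx s, inner_sub_right, real_inner_smul_right]
        have := real_inner_le_norm b g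
        rw [hb, one_mul] at this
        push_cast
        nlinarith
  exact (key t ht).2
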